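/- Let A be an associative k-algebra with subalgebra R and e ∈ R an idempotent with ReR = R. Then the multiplication by e induces an isomorphism of eAe-bimodules e·Ω¹_R(A)·e ≅ Ω¹_{eRe}(eAe), where Ω¹_R(A) = ker(A ⊗_R A → A) is the bimodule of noncommutative relative 1-forms. -/

import Mathlib

open scoped TensorProduct

section

variable (k : Type*) [Field k] (A : Type*) [Ring A] [Algebra k A]

/-- The balancing relations over `R ⊆ A` inside `A ⊗[k] A`: the quotient is `A ⊗_R A`. -/
def balancingA (S : Set A) : Submodule k (A ⊗[k] A) :=
  Submodule.span k
    {z : A ⊗[k] A | ∃ (x y r : A), r ∈ S ∧ z = (x * r) ⊗ₜ[k] y - x ⊗ₜ[k] (r * y)}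

/-- The image of `eAe ⊗[k] eAe` inside `A ⊗[k] A`. -/
def cornerTensorA (e : A) : Submodule k (A ⊗[k] A) :=
  Submodule.span k
    {z : A ⊗[k] A | ∃ x y : A, z = (e * x * e) ⊗ₜ[k] (e * y * e)}

/-- The balancing relations over `eRe` inside the image of `eAe ⊗[k] eAe`:
the quotient is `eAe ⊗_{eRe} eAe`. -/
def cornerBalancingA (e : A) (S : Set A) : Submodule k (A ⊗[k] A) :=
  Submodule.span k
    {z : A ⊗[k] A | ∃ (x y r : A), r ∈ S ∧
      z = ((e * x * e) * (e * r * e)) ⊗ₜ[k] (e * y * e) -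
        (e * x * e) ⊗ₜ[k] ((e * r * e) * (e * y * e))}

end

namespace CornerOneForms

variable {k : Type*} [Field k] {A : Type*} [Ring A] [Algebra k A]

noncomputable def piece (k : Type*) [Field k] {A : Type*} [Ring A] [Algebra k A]
    (e a b : A) : A ⊗[k] A →ₗ[k] A ⊗[k] A :=
  TensorProduct.map ((LinearMap.mulLeft k e).comp (LinearMap.mulRight k (a * e)))
    ((LinearMap.mulRight k e).comp (LinearMap.mulLeft k (e * b)))

lemma piece_tmul (e a b x y : A) :
    piece k e a b (x ⊗ₜ[k] y) = (e * (x * a) * e) ⊗ₜ[k] (e * (b * y) * e) := by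
  simp only [piece, TensorProduct.map_tmul, LinearMap.coe_comp, Function.comp_apply,
    LinearMap.mulLeft_apply, LinearMap.mulRight_apply]
  simp only [mul_assoc]

lemma piece_mem (e a b : A) (z : A ⊗[k] A) : piece k e a b z ∈ cornerTensorA k A e := by
  induction z using TensorProduct.induction_on with
  | zero => simp only [map_zero]; exact zero_mem _
  | tmul x y => rw [piece_tmul]; exact Submodule.subset_span ⟨x * a, b * y, rfl⟩
  | add u v hu hv => rw [map_add]; exact add_mem hu hv

lemma mk_congr {e : A} {S : Set A} {z₁ z₂ : A ⊗[k] A}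
    (h₁ : z₁ ∈ cornerTensorA k A e) (h₂ : z₂ ∈ cornerTensorA k A e) (h : z₁ = z₂) :
    (Submodule.Quotient.mk ⟨z₁, h₁⟩ :
      cornerTensorA k A e ⧸ (cornerBalancingA k A e S).comap (cornerTensorA k A e).subtype) =
    Submodule.Quotient.mk ⟨z₂, h₂⟩ := by subst h; rfl

lemma mk_eq_of_sub_mem {e : A} {S : Set A} {z₁ z₂ : A ⊗[k] A}
    (h₁ : z₁ ∈ cornerTensorA k A e) (h₂ : z₂ ∈ cornerTensorA k A e)
    (h : z₁ - z₂ ∈ cornerBalancingA k A e S) :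
    (Submodule.Quotient.mk ⟨z₁, h₁⟩ :
      cornerTensorA k A e ⧸ (cornerBalancingA k A e S).comap (cornerTensorA k A e).subtype) =
    Submodule.Quotient.mk ⟨z₂, h₂⟩ := by
  rw [Submodule.Quotient.eq]
  exact Submodule.mem_comap.2 (by simpa using h)

lemma mk_sum {e : A} {S : Set A} {ι : Type*} [Fintype ι]
    (z : ι → A ⊗[k] A) (h : ∀ i, z i ∈ cornerTensorA k A e) :
    (∑ i, (Submodule.Quotient.mk ⟨z i, h i⟩ :
      cornerTensorA k A e ⧸ (cornerBalancingA k A e S).comap (cornerTensorA k A e).subtype)) =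
    Submodule.Quotient.mk ⟨∑ i, z i, sum_mem fun i _ => h i⟩ := by
  have h1 : (⟨∑ i, z i, sum_mem fun i _ => h i⟩ : cornerTensorA k A e) =
      ∑ i, (⟨z i, h i⟩ : cornerTensorA k A e) := by
    ext
    simp
  rw [h1]
  exact (map_sum ((cornerBalancingA k A e S).comap (cornerTensorA k A e).subtype).mkQ _ _).symm

lemma cornerQuot_induction (e : A) (S : Set A)
    {P : (cornerTensorA k A e ⧸
      (cornerBalancingA k A e S).comap (cornerTensorA k A e).subtype) → Prop}
    (h0 : P 0) (hadd : ∀ a b, P a → P b → P (a + b))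
    (hsmul : ∀ (c : k) a, P a → P (c • a))
    (hgen : ∀ x y : A, P (Submodule.Quotient.mk
      ⟨(e * x * e) ⊗ₜ[k] (e * y * e), Submodule.subset_span ⟨x, y, rfl⟩⟩))
    (w : cornerTensorA k A e ⧸
      (cornerBalancingA k A e S).comap (cornerTensorA k A e).subtype) : P w := by
  obtain ⟨⟨z, hz⟩, rfl⟩ := Submodule.Quotient.mk_surjective _ w
  have hz' : z ∈ Submodule.span k
      {z : A ⊗[k] A | ∃ x y : A, z = (e * x * e) ⊗ₜ[k] (e * y * e)} := hz
  refine Submodule.span_induction (p := fun z _ => ∀ h : z ∈ cornerTensorA k A e,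
      P (Submodule.Quotient.mk ⟨z, h⟩)) ?_ ?_ ?_ ?_ hz' hz
  · rintro z ⟨x, y, rfl⟩ h
    exact hgen x y
  · intro h
    have h0' : (⟨0, h⟩ : cornerTensorA k A e) = 0 := rfl
    rw [h0', Submodule.Quotient.mk_zero]
    exact h0
  · intro u v hu hv pu pv h
    have h2 := hadd _ _ (pu hu) (pv hv)
    rwa [← Submodule.Quotient.mk_add] at h2
  · intro a u hu pu h
    have h2 := hsmul a _ (pu hu)
    rwa [← Submodule.Quotient.mk_smul] at h2

lemma quot_induction (S : Set A)
    {P : ((A ⊗[k] A) ⧸ balancingA k A S) → Prop}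
    (h0 : P 0) (hadd : ∀ a b, P a → P b → P (a + b))
    (hgen : ∀ x y : A, P (Submodule.Quotient.mk (x ⊗ₜ[k] y)))
    (v : (A ⊗[k] A) ⧸ balancingA k A S) : P v := by
  obtain ⟨z, rfl⟩ := Submodule.Quotient.mk_surjective _ v
  induction z using TensorProduct.induction_on with
  | zero => rw [Submodule.Quotient.mk_zero]; exact h0
  | tmul x y => exact hgen x y
  | add u v hu hv => rw [Submodule.Quotient.mk_add]; exact hadd _ _ hu hv

end CornerOneForms

/-- Let `A` be a `k`-algebra with subalgebra `R` and `e ∈ R` an idempotent with `ReR = R`.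
Then multiplication by `e` induces an isomorphism of `eAe`-bimodules
`e·Ω¹_R(A)·e ≅ Ω¹_{eRe}(eAe)`, where `Ω¹_R(A) = ker(A ⊗_R A → A)`.

We model `A ⊗_R A` as `(A ⊗[k] A)/balancing` and `eAe ⊗_{eRe} eAe` as the corresponding
corner quotient; the multiplication maps `m̄`, `m̄ₑ`, the canonical map `c`, and the
bimodule actions are quantified with their characterizing properties.  The conclusion says
that `c` restricts to an `eAe`-bilinear bijection from `Ω¹_{eRe}(eAe) = ker m̄ₑ` onto
`e·Ω¹_R(A)·e = {v ∈ ker m̄ | e·v·e = v}`. -/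
theorem corner_one_forms_iso
    {k : Type*} [Field k] [CharZero k] {A : Type*} [Ring A] [Algebra k A]
    (R : Subalgebra k A) (e : A) (he : e ∈ R) (hidem : e * e = e)
    {ι : Type*} [Fintype ι] (p q : ι → A)
    (hp : ∀ i, p i ∈ R) (hq : ∀ i, q i ∈ R)
    (hdec : (1 : A) = ∑ i, p i * e * q i)
    -- the multiplication map on `A ⊗_R A`
    (mbar : ((A ⊗[k] A) ⧸ balancingA k A ↑R) →ₗ[k] A)
    (hmbar : ∀ x y : A, mbar (Submodule.Quotient.mk (x ⊗ₜ[k] y)) = x * y)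
    -- the outer bimodule actions on `A ⊗_R A`
    (lmul rmul : A → ((A ⊗[k] A) ⧸ balancingA k A ↑R) →ₗ[k]
      ((A ⊗[k] A) ⧸ balancingA k A ↑R))
    (hlmul : ∀ a x y : A,
      lmul a (Submodule.Quotient.mk (x ⊗ₜ[k] y)) = Submodule.Quotient.mk ((a * x) ⊗ₜ[k] y))
    (hrmul : ∀ a x y : A,
      rmul a (Submodule.Quotient.mk (x ⊗ₜ[k] y)) = Submodule.Quotient.mk (x ⊗ₜ[k] (y * a)))
    -- the multiplication map on `eAe ⊗_{eRe} eAe`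
    (mbarE : (cornerTensorA k A e ⧸
        (cornerBalancingA k A e ↑R).comap (cornerTensorA k A e).subtype) →ₗ[k] A)
    (hmbarE : ∀ x y : A,
      mbarE (Submodule.Quotient.mk
        ⟨(e * x * e) ⊗ₜ[k] (e * y * e), Submodule.subset_span ⟨x, y, rfl⟩⟩) =
          (e * x * e) * (e * y * e))
    -- the corner bimodule actions on `eAe ⊗_{eRe} eAe`
    (lmulE rmulE : A → (cornerTensorA k A e ⧸
        (cornerBalancingA k A e ↑R).comap (cornerTensorA k A e).subtype) →ₗ[k]
      (cornerTensorA k A e ⧸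
        (cornerBalancingA k A e ↑R).comap (cornerTensorA k A e).subtype))
    (hlmulE : ∀ a x y : A,
      lmulE a (Submodule.Quotient.mk
          ⟨(e * x * e) ⊗ₜ[k] (e * y * e), Submodule.subset_span ⟨x, y, rfl⟩⟩) =
        Submodule.Quotient.mk
          ⟨(e * (a * e * x) * e) ⊗ₜ[k] (e * y * e),
            Submodule.subset_span ⟨a * e * x, y, rfl⟩⟩)
    (hrmulE : ∀ a x y : A,
      rmulE a (Submodule.Quotient.mk
          ⟨(e * x * e) ⊗ₜ[k] (e * y * e), Submodule.subset_span ⟨x, y, rfl⟩⟩) =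
        Submodule.Quotient.mk
          ⟨(e * x * e) ⊗ₜ[k] (e * (y * e * a) * e),
            Submodule.subset_span ⟨x, y * e * a, rfl⟩⟩)
    -- the canonical map `eAe ⊗_{eRe} eAe → A ⊗_R A`
    (c : (cornerTensorA k A e ⧸
        (cornerBalancingA k A e ↑R).comap (cornerTensorA k A e).subtype) →ₗ[k]
      ((A ⊗[k] A) ⧸ balancingA k A ↑R))
    (hc : ∀ (z : A ⊗[k] A) (hz : z ∈ cornerTensorA k A e),
      c (Submodule.Quotient.mk ⟨z, hz⟩) = Submodule.Quotient.mk z) :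
    -- `c` maps `Ω¹_{eRe}(eAe)` into `e·Ω¹_R(A)·e` …
    (∀ w, mbarE w = 0 → mbar (c w) = 0 ∧ lmul e (rmul e (c w)) = c w) ∧
    -- … bijectively …
    (∀ w w', mbarE w = 0 → mbarE w' = 0 → c w = c w' → w = w') ∧
    (∀ v, mbar v = 0 → lmul e (rmul e v) = v → ∃ w, mbarE w = 0 ∧ c w = v) ∧
    -- … and `eAe`-bilinearly.
    (∀ (a : A) w, c (lmulE a w) = lmul (e * a * e) (c w) ∧
      c (rmulE a w) = rmul (e * a * e) (c w)) := by
  classical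
  have heA : ∀ t : A, e * (e * t) = e * t := fun t => by rw [← mul_assoc, hidem]
  -- Step A : mbar ∘ c = mbarE
  have hmc : ∀ w, mbar (c w) = mbarE w := by
    intro w
    induction w using CornerOneForms.cornerQuot_induction with
    | h0 => simp
    | hadd a b ha hb => simp [map_add, ha, hb]
    | hsmul r a ha => simp [map_smul, ha]
    | hgen x y => erw [hc, hmbar, hmbarE]
  -- Step B : lmul e ∘ rmul e ∘ c = c
  have hee : ∀ w, lmul e (rmul e (c w)) = c w := by
    intro w
    induction w using CornerOneForms.cornerQuot_induction with
    | h0 => simp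
    | hadd a b ha hb => simp [map_add, ha, hb]
    | hsmul r a ha => simp [map_smul, ha]
    | hgen x y =>
      erw [hc, hrmul, hlmul]
      simp only [mul_assoc, heA, hidem]
  -- Step C : bilinearity
  have hbil : ∀ (a : A) w, c (lmulE a w) = lmul (e * a * e) (c w) ∧
      c (rmulE a w) = rmul (e * a * e) (c w) := by
    intro a w
    induction w using CornerOneForms.cornerQuot_induction with
    | h0 => simp
    | hadd u v hu hv => exact ⟨by simp [map_add, hu.1, hv.1], by simp [map_add, hu.2, hv.2]⟩
    | hsmul r u hu => exact ⟨by simp [map_smul, hu.1], by simp [map_smul, hu.2]⟩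
    | hgen x y =>
      constructor
      · erw [hlmulE, hc, hc, hlmul]
        simp only [mul_assoc, heA, hidem]
      · erw [hrmulE, hc, hc, hrmul]
        simp only [mul_assoc, heA, hidem]
  -- the basic summation identity
  have hI : ∀ u v : A, (∑ i, (e * (u * p i) * e) * (e * (q i * v) * e)) = e * (u * v) * e := by
    intro u v
    calc (∑ i, (e * (u * p i) * e) * (e * (q i * v) * e))
        = ∑ i, (e * u) * ((p i * e * q i) * (v * e)) :=
          Finset.sum_congr rfl fun i _ => by simp only [mul_assoc, heA]
      _ = (e * u) * ((∑ i, p i * e * q i) * (v * e)) := by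
          rw [← Finset.mul_sum, ← Finset.sum_mul]
      _ = e * (u * v) * e := by rw [← hdec, one_mul]; simp only [mul_assoc]
  -- the one-step balancing lemma
  have hL : ∀ u v w : A, w ∈ R →
      (∑ i, ((e * u * e) * (e * (w * p i) * e)) ⊗ₜ[k] (e * (q i * v) * e)) -
        (e * u * e) ⊗ₜ[k] (e * (w * v) * e) ∈ cornerBalancingA k A e ↑R := by
    intro u v w hw
    have hmid : (e * u * e) ⊗ₜ[k] (e * (w * v) * e) =
        ∑ i, (e * u * e) ⊗ₜ[k] ((e * (w * p i) * e) * (e * (q i * v) * e)) := by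
      rw [← TensorProduct.tmul_sum, hI w v]
    rw [hmid, ← Finset.sum_sub_distrib]
    exact sum_mem fun i _ => Submodule.subset_span
      ⟨u, q i * v, w * p i, mul_mem hw (hp i), rfl⟩
  -- key membership for the well-definedness of φ
  have hD1 : ∀ x y r : A, r ∈ R →
      (∑ i, (e * ((x * r) * p i) * e) ⊗ₜ[k] (e * (q i * y) * e)) -
        ∑ j, (e * (x * p j) * e) ⊗ₜ[k] (e * (q j * (r * y)) * e)
        ∈ cornerBalancingA k A e ↑R := by
    intro x y r hr
    have expand : ∀ i, (e * ((x * r) * p i) * e) ⊗ₜ[k] (e * (q i * y) * e) =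
        ∑ j, ((e * (x * p j) * e) * (e * ((q j * r) * p i) * e)) ⊗ₜ[k] (e * (q i * y) * e) := by
      intro i
      rw [← TensorProduct.sum_tmul]
      congr 1
      calc e * ((x * r) * p i) * e = e * (x * (r * p i)) * e := by simp only [mul_assoc]
        _ = ∑ j, (e * (x * p j) * e) * (e * (q j * (r * p i)) * e) := (hI x (r * p i)).symm
        _ = ∑ j, (e * (x * p j) * e) * (e * ((q j * r) * p i) * e) :=
            Finset.sum_congr rfl fun j _ => by simp only [mul_assoc]
    have e2 : (∑ i, (e * ((x * r) * p i) * e) ⊗ₜ[k] (e * (q i * y) * e)) =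
        ∑ j, ∑ i, ((e * (x * p j) * e) * (e * ((q j * r) * p i) * e)) ⊗ₜ[k]
          (e * (q i * y) * e) := by
      rw [Finset.sum_congr rfl fun i _ => expand i]
      exact Finset.sum_comm
    rw [e2, ← Finset.sum_sub_distrib]
    refine sum_mem fun j _ => ?_
    have hLj := hL (x * p j) y (q j * r) (mul_mem (hq j) hr)
    rw [show e * (q j * (r * y)) * e = e * ((q j * r) * y) * e from by simp only [mul_assoc]]
    exact hLj
  -- key membership for φ ∘ c = id
  have hD2 : ∀ x y : A,
      (∑ i, (e * ((e * x * e) * p i) * e) ⊗ₜ[k] (e * (q i * (e * y * e)) * e)) -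
        (e * x * e) ⊗ₜ[k] (e * y * e) ∈ cornerBalancingA k A e ↑R := by
    intro x y
    have hLe := hL x (e * y * e) e he
    rw [show (∑ i, ((e * x * e) * (e * (e * p i) * e)) ⊗ₜ[k] (e * (q i * (e * y * e)) * e)) =
        ∑ i, (e * ((e * x * e) * p i) * e) ⊗ₜ[k] (e * (q i * (e * y * e)) * e) from
        Finset.sum_congr rfl fun i _ => by simp only [mul_assoc, heA, hidem],
      show e * (e * (e * y * e)) * e = e * y * e from by simp only [mul_assoc, heA, hidem]]
      at hLe
    exact hLe
  -- key membership for c ∘ φ = e·(-)·e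
  have hD3 : ∀ x y : A,
      (∑ i, (e * (x * p i) * e) ⊗ₜ[k] (e * (q i * y) * e)) - (e * x) ⊗ₜ[k] (y * e)
        ∈ balancingA k A ↑R := by
    intro x y
    have hb : (e * x) ⊗ₜ[k] (y * e) =
        ∑ i, (e * x) ⊗ₜ[k] ((p i * e) * (e * (q i * y) * e)) := by
      rw [← TensorProduct.tmul_sum]
      congr 1
      calc y * e = (∑ i, p i * e * q i) * (y * e) := by rw [← hdec, one_mul]
        _ = ∑ i, (p i * e) * (e * (q i * y) * e) := by
            rw [Finset.sum_mul]
            exact Finset.sum_congr rfl fun i _ => by simp only [mul_assoc, heA]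
    rw [hb, ← Finset.sum_sub_distrib]
    exact sum_mem fun i _ => Submodule.subset_span
      ⟨e * x, e * (q i * y) * e, p i * e, mul_mem (hp i) he, by simp only [mul_assoc]⟩
  -- construction of the inverse map φ
  have hexφ : ∃ φ : ((A ⊗[k] A) ⧸ balancingA k A ↑R) →ₗ[k]
      (cornerTensorA k A e ⧸ (cornerBalancingA k A e ↑R).comap (cornerTensorA k A e).subtype),
      ∀ x y : A, φ (Submodule.Quotient.mk (x ⊗ₜ[k] y)) =
        ∑ i, Submodule.Quotient.mk ⟨(e * (x * p i) * e) ⊗ₜ[k] (e * (q i * y) * e),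
          Submodule.subset_span ⟨x * p i, q i * y, rfl⟩⟩ := by
    set ψ : A ⊗[k] A →ₗ[k]
        (cornerTensorA k A e ⧸ (cornerBalancingA k A e ↑R).comap (cornerTensorA k A e).subtype) :=
      ∑ i, (((cornerBalancingA k A e ↑R).comap (cornerTensorA k A e).subtype).mkQ).comp
        (LinearMap.codRestrict (cornerTensorA k A e)
          (CornerOneForms.piece k e (p i) (q i))
          (CornerOneForms.piece_mem e (p i) (q i))) with hψdef
    have hψ : ∀ x y : A, ψ (x ⊗ₜ[k] y) =
        ∑ i, Submodule.Quotient.mk ⟨(e * (x * p i) * e) ⊗ₜ[k] (e * (q i * y) * e),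
          Submodule.subset_span ⟨x * p i, q i * y, rfl⟩⟩ := by
      intro x y
      rw [hψdef, LinearMap.sum_apply]
      refine Finset.sum_congr rfl fun i _ => ?_
      rw [LinearMap.comp_apply, Submodule.mkQ_apply]
      refine congrArg _ (Subtype.ext ?_)
      rw [LinearMap.codRestrict_apply]
      exact CornerOneForms.piece_tmul e (p i) (q i) x y
    have hker : balancingA k A ↑R ≤ LinearMap.ker ψ := by
      rw [balancingA, Submodule.span_le]
      rintro z ⟨x, y, r, hr, rfl⟩
      rw [SetLike.mem_coe, LinearMap.mem_ker, map_sub, sub_eq_zero, hψ, hψ]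
      refine (CornerOneForms.mk_sum _ _).trans
        (Eq.trans (CornerOneForms.mk_eq_of_sub_mem _ _ (hD1 x y r hr))
          (CornerOneForms.mk_sum _ _).symm)
    exact ⟨(balancingA k A ↑R).liftQ ψ hker, fun x y => by
      rw [Submodule.liftQ_apply]; exact hψ x y⟩
  obtain ⟨φ, hφ⟩ := hexφ
  -- Step E : φ ∘ c = id
  have hφc : ∀ w, φ (c w) = w := by
    intro w
    induction w using CornerOneForms.cornerQuot_induction with
    | h0 => simp
    | hadd a b ha hb => simp [map_add, ha, hb]
    | hsmul r a ha => simp [map_smul, ha]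
    | hgen x y =>
      erw [hc, hφ]
      exact (CornerOneForms.mk_sum _ _).trans
        (CornerOneForms.mk_eq_of_sub_mem _ _ (hD2 x y))
  -- Step F : c ∘ φ = e·(-)·e
  have hcφ : ∀ v, c (φ v) = lmul e (rmul e v) := by
    intro v
    induction v using CornerOneForms.quot_induction with
    | h0 => simp
    | hadd a b ha hb => simp [map_add, ha, hb]
    | hgen x y =>
      rw [hφ, map_sum, hrmul, hlmul]
      have : ∀ i, c (Submodule.Quotient.mk
          ⟨(e * (x * p i) * e) ⊗ₜ[k] (e * (q i * y) * e),
            Submodule.subset_span ⟨x * p i, q i * y, rfl⟩⟩) =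
          Submodule.Quotient.mk ((e * (x * p i) * e) ⊗ₜ[k] (e * (q i * y) * e)) :=
        fun i => hc _ _
      rw [Finset.sum_congr rfl fun i _ => this i]
      have hsum : (∑ i, (Submodule.Quotient.mk
          ((e * (x * p i) * e) ⊗ₜ[k] (e * (q i * y) * e)) :
            (A ⊗[k] A) ⧸ balancingA k A ↑R)) =
          Submodule.Quotient.mk (∑ i, (e * (x * p i) * e) ⊗ₜ[k] (e * (q i * y) * e)) :=
        (map_sum (balancingA k A ↑R).mkQ _ _).symm
      rw [hsum, Submodule.Quotient.eq]
      exact hD3 x y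
  refine ⟨?_, ?_, ?_, fun a w => hbil a w⟩
  · intro w hw
    exact ⟨(hmc w).trans hw, hee w⟩
  · intro w w' _ _ hcc
    rw [← hφc w, ← hφc w', hcc]
  · intro v hv hev
    refine ⟨φ v, ?_, by rw [hcφ v, hev]⟩
    rw [← hmc (φ v), hcφ v, hev]
    exact hv
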